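/- arXiv:0911.1023 — 5 statements merged into one kernel-verified Lean document; each statement's English description precedes it below -/
import Mathlib

section
/- If X is a topological space that admits an unbounded continuous real-valued function (i.e., X is not pseudocompact) and X has a π-base consisting of clopen sets, then X can be written as the disjoint union of infinitely many nonempty clopen subsets. -/
open Set

/-- `X` is pseudocompact: every continuous real-valued function is bounded. -/
def Pseudocompact (X : Type*) [TopologicalSpace X] : Prop :=
  ∀ f : X → ℝ, Continuous f → ∃ M : ℝ, ∀ x : X, |f x| ≤ M

/-- `B` is a π-base for `X`: a collection of nonempty open sets such that every
nonempty open set contains a member of `B`. -/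
def IsPiBase {X : Type*} [TopologicalSpace X] (B : Set (Set X)) : Prop :=
  (∀ V ∈ B, IsOpen V ∧ V.Nonempty) ∧
    ∀ U : Set X, IsOpen U → U.Nonempty → ∃ V ∈ B, V ⊆ U

/-- If `X` is Tychonoff, not pseudocompact, and has a π-base of clopen sets, then `X` is
the disjoint union of infinitely many nonempty clopen subsets. -/
theorem stmt0 {X : Type*} [TopologicalSpace X] [T35Space X]
    (hnp : ¬ Pseudocompact X)
    (B : Set (Set X)) (hB : IsPiBase B) (hBclopen : ∀ V ∈ B, IsClopen V) :
    ∃ C : ℕ → Set X, (∀ n, IsClopen (C n) ∧ (C n).Nonempty) ∧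
      Pairwise (Function.onFun Disjoint C) ∧ (⋃ n, C n) = univ := by
  rw [Pseudocompact] at hnp
  push_neg at hnp
  obtain ⟨f, hf, hub⟩ := hnp
  -- `Unb A` : f is unbounded on A
  set Unb : Set X → Prop := fun A => ∀ M : ℝ, ∃ x ∈ A, M < |f x| with hUnb
  have habs : Continuous fun z => |f z| := hf.abs
  have hstep : ∀ (A : Set X), IsClopen A → Unb A → ∀ n : ℕ,
      ∃ W : Set X, IsClopen W ∧ W.Nonempty ∧ W ⊆ A ∧ (∀ z ∈ W, (n : ℝ) < |f z|) ∧
        Unb (A \ W) := by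
    intro A hA hU n
    obtain ⟨x, hxA, hx⟩ := hU n
    set U : Set X := A ∩ (fun z => |f z|) ⁻¹' Set.Ioo (n : ℝ) (|f x| + 1) with hUdef
    have hUopen : IsOpen U := hA.2.inter (isOpen_Ioo.preimage habs)
    have hxU : x ∈ U := ⟨hxA, hx, lt_add_one _⟩
    obtain ⟨W, hWB, hWU⟩ := hB.2 U hUopen ⟨x, hxU⟩
    refine ⟨W, hBclopen W hWB, (hB.1 W hWB).2, fun z hz => (hWU hz).1,
      fun z hz => (hWU hz).2.1, ?_⟩
    intro M
    obtain ⟨y, hyA, hy⟩ := hU (max M (|f x| + 1))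
    refine ⟨y, ⟨hyA, fun hyW => ?_⟩, lt_of_le_of_lt (le_max_left _ _) hy⟩
    exact absurd (hWU hyW).2.2 (not_lt.2 (le_of_lt (lt_of_le_of_lt (le_max_right _ _) hy)))
  have hUnbUniv : Unb univ := fun M => by simpa using hub M
  -- recursive construction
  let F : ℕ → {A : Set X // IsClopen A ∧ Unb A} := fun n => Nat.rec
    ⟨univ, isClopen_univ, hUnbUniv⟩
    (fun n ih => ⟨ih.1 \ (hstep ih.1 ih.2.1 ih.2.2 n).choose,
      ih.2.1.diff (hstep ih.1 ih.2.1 ih.2.2 n).choose_spec.1,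
      (hstep ih.1 ih.2.1 ih.2.2 n).choose_spec.2.2.2.2⟩) n
  let D : ℕ → Set X := fun n => (hstep (F n).1 (F n).2.1 (F n).2.2 n).choose
  have hDspec : ∀ n, IsClopen (D n) ∧ (D n).Nonempty ∧ D n ⊆ (F n).1 ∧
      (∀ z ∈ D n, (n : ℝ) < |f z|) ∧ Unb ((F n).1 \ D n) :=
    fun n => (hstep (F n).1 (F n).2.1 (F n).2.2 n).choose_spec
  have hFS : ∀ n, (F (n + 1)).1 = (F n).1 \ D n := fun n => rfl
  have hmono : ∀ m n, m ≤ n → (F n).1 ⊆ (F m).1 := by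
    intro m n hmn
    induction n with
    | zero => simp_all
    | succ n ih =>
      rcases Nat.lt_or_ge m (n + 1) with h | h
      · exact (hFS n ▸ Set.diff_subset).trans (ih (Nat.lt_succ_iff.mp h))
      · have : m = n + 1 := le_antisymm hmn h
        subst this; exact le_refl _
  have hdisj : ∀ m n, m < n → Disjoint (D m) (D n) := by
    intro m n hmn
    have h1 : D n ⊆ (F (m + 1)).1 := (hDspec n).2.2.1.trans (hmono (m + 1) n hmn)
    rw [hFS m] at h1
    exact Set.disjoint_left.mpr fun a ham han => (h1 han).2 ham
  -- the final family
  refine ⟨fun n => Nat.rec ((⋃ k, D (k + 1))ᶜ) (fun n _ => D (n + 1)) n, ?_, ?_, ?_⟩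
  · rintro (_ | n)
    · constructor
      · constructor
        · exact (isOpen_iUnion fun k => (hDspec (k + 1)).1.2).isClosed_compl
        · rw [isOpen_iff_forall_mem_open]
          intro x hx
          obtain ⟨N, hN⟩ := exists_nat_gt |f x|
          refine ⟨((fun z => |f z|) ⁻¹' Set.Iio (N : ℝ)) ∩
            ⋂ k ∈ Finset.range N, (D (k + 1))ᶜ, ?_, ?_, ?_⟩
          · rintro z ⟨hz1, hz2⟩
            simp only [Set.mem_compl_iff]
            intro hzU
            obtain ⟨k, hk⟩ := Set.mem_iUnion.mp hzU
            rcases Nat.lt_or_ge k N with h | h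
            · exact (Set.mem_iInter₂.mp hz2 k (Finset.mem_range.mpr h)) hk
            · have h1 := (hDspec (k + 1)).2.2.2.1 z hk
              have h2 : (N : ℝ) ≤ (k + 1 : ℕ) := by exact_mod_cast Nat.le_succ_of_le h
              exact absurd hz1 (not_lt.2 (h2.trans h1.le))
          · exact (isOpen_Iio.preimage habs).inter
              (isOpen_biInter_finset fun k _ => (hDspec (k + 1)).1.1.isOpen_compl)
          · refine ⟨hN, Set.mem_iInter₂.mpr fun k _ => ?_⟩
            exact fun h => hx (Set.mem_iUnion.mpr ⟨k, h⟩)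
      · obtain ⟨x, hx⟩ := (hDspec 0).2.1
        refine ⟨x, fun hxU => ?_⟩
        obtain ⟨k, hk⟩ := Set.mem_iUnion.mp hxU
        exact Set.disjoint_left.mp (hdisj 0 (k + 1) (Nat.succ_pos k)) hx hk
    · exact ⟨(hDspec (n + 1)).1, (hDspec (n + 1)).2.1⟩
  · rintro (_ | m) (_ | n) hmn
    · exact absurd rfl hmn
    · exact Set.disjoint_left.mpr fun a ha han =>
        ha (Set.mem_iUnion.mpr ⟨n, han⟩)
    · exact Set.disjoint_right.mpr fun a ha ham =>
        ha (Set.mem_iUnion.mpr ⟨m, ham⟩)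
    · rcases Nat.lt_or_ge (m + 1) (n + 1) with h | h
      · exact hdisj (m + 1) (n + 1) h
      · have h2 : n + 1 < m + 1 := lt_of_le_of_ne h (by simpa [eq_comm] using hmn)
        exact (hdisj (n + 1) (m + 1) h2).symm
  · rw [Set.eq_univ_iff_forall]
    intro x
    by_cases hx : x ∈ ⋃ k, D (k + 1)
    · obtain ⟨k, hk⟩ := Set.mem_iUnion.mp hx
      exact Set.mem_iUnion.mpr ⟨k + 1, hk⟩
    · exact Set.mem_iUnion.mpr ⟨0, hx⟩
end

section
/- If C is a clopen subset of a product space X × Y that can be written as a finite union of rectangles (sets of the form A × B), then C can be written as a finite union of pairwise disjoint clopen rectangles (sets U × V with U clopen in X and V clopen in Y). -/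
open Set

/-- If `C` is a clopen subset of `X × Y` that is a finite union of rectangles, then `C` is a
finite union of pairwise disjoint clopen rectangles. -/
theorem stmt1 {X Y : Type*} [TopologicalSpace X] [TopologicalSpace Y]
    (C : Set (X × Y)) (hC : IsClopen C)
    (n : ℕ) (A : Fin n → Set X) (B : Fin n → Set Y)
    (hunion : C = ⋃ i, A i ×ˢ B i) :
    ∃ (m : ℕ) (U : Fin m → Set X) (V : Fin m → Set Y),
      (∀ j, IsClopen (U j) ∧ IsClopen (V j)) ∧
      Pairwise (Function.onFun Disjoint (fun j => U j ×ˢ V j)) ∧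
      C = ⋃ j, U j ×ˢ V j := by
  classical
  -- horizontal and vertical cross-sections
  set sec : Y → Set X := fun y => {x | (x, y) ∈ C} with hsec
  set τ : X → Set Y := fun x => {y | (x, y) ∈ C} with hτ
  have hsec_clopen : ∀ y, IsClopen (sec y) := fun y =>
    hC.preimage (continuous_id.prodMk continuous_const)
  have hτ_clopen : ∀ x, IsClopen (τ x) := fun x =>
    hC.preimage (continuous_const.prodMk continuous_id)
  -- finite ranges
  have hsec_fin : (Set.range sec).Finite := by
    apply (Set.finite_range (fun s : Set (Fin n) => ⋃ i ∈ s, A i)).subset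
    rintro _ ⟨y, rfl⟩
    refine ⟨{i | y ∈ B i}, ?_⟩
    ext x
    simp [hsec, hunion]
    tauto
  have hτ_fin : (Set.range τ).Finite := by
    apply (Set.finite_range (fun s : Set (Fin n) => ⋃ i ∈ s, B i)).subset
    rintro _ ⟨x, rfl⟩
    refine ⟨{i | x ∈ A i}, ?_⟩
    ext y
    simp [hτ, hunion]
  -- fibers of τ are clopen
  have hfiber : ∀ E : Set Y, IsClopen {x | τ x = E} := by
    intro E
    set S : Y → Set X := fun y => if y ∈ E then sec y else (sec y)ᶜ with hS
    have key : {x | τ x = E} = ⋂ y, S y := by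
      ext x
      simp only [mem_setOf_eq, mem_iInter, hS]
      constructor
      · rintro rfl y
        split_ifs with h
        · exact h
        · exact h
      · intro h
        ext y
        specialize h y
        by_cases hy : y ∈ E <;> simp [hy] at h <;> simp [hy, h]
           <;> exact h
    rw [key, ← Set.sInter_range, Set.sInter_eq_biInter]
    have hfin : (Set.range S).Finite := by
      apply (hsec_fin.union (hsec_fin.image compl)).subset
      rintro _ ⟨y, rfl⟩
      by_cases hy : y ∈ E
      · exact Or.inl ⟨y, by simp [hS, hy]⟩
      · exact Or.inr ⟨sec y, ⟨y, rfl⟩, by simp [hS, hy]⟩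
    refine hfin.isClopen_biInter ?_
    rintro _ ⟨y, rfl⟩
    simp only [hS]
    split_ifs
    · exact hsec_clopen y
    · exact (hsec_clopen y).compl
  -- index by the finite range of τ
  set F := hτ_fin.toFinset with hF
  set e : Fin F.card → Set Y := fun j => (F.equivFin.symm j : Set Y) with he
  have he_inj : Function.Injective e := fun j k h => by
    have := Subtype.coe_injective h
    exact F.equivFin.symm.injective this
  refine ⟨F.card, fun j => {x | τ x = e j}, e, ?_, ?_, ?_⟩
  · intro j
    refine ⟨hfiber (e j), ?_⟩
    have : e j ∈ Set.range τ := by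
      have := (F.equivFin.symm j).2
      exact hτ_fin.mem_toFinset.mp this
    obtain ⟨x, hx⟩ := this
    rw [← hx]
    exact hτ_clopen x
  · intro j k hjk
    simp only [Function.onFun]
    rw [Set.disjoint_left]
    rintro ⟨x, y⟩ ⟨hx1, _⟩ ⟨hx2, _⟩
    exact hjk (he_inj (hx1.symm.trans hx2))
  · ext ⟨x, y⟩
    simp only [mem_iUnion, Set.mem_prod, mem_setOf_eq]
    constructor
    · intro h
      have hmem : τ x ∈ F := hτ_fin.mem_toFinset.mpr ⟨x, rfl⟩
      refine ⟨F.equivFin ⟨τ x, hmem⟩, ?_, ?_⟩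
      · simp [he]
      · have : e (F.equivFin ⟨τ x, hmem⟩) = τ x := by simp [he]
        rw [this]
        exact h
    · rintro ⟨j, hx, hy⟩
      rw [← hx] at hy
      exact hy
end

section
/- If X is an h-homogeneous space that is not connected, then X is homeomorphic to the disjoint union of n copies of X for every positive integer n. -/
open Set

/-- `X` is h-homogeneous: all nonempty clopen subsets are homeomorphic to each other. -/
def IsHHomogeneous (X : Type*) [TopologicalSpace X] : Prop :=
  ∀ C D : Set X, IsClopen C → C.Nonempty → IsClopen D → D.Nonempty →
    Nonempty (C ≃ₜ D)

/-- An equiv between discrete spaces is a homeomorphism. -/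
def discreteHomeomorph {α β : Type*} [TopologicalSpace α] [TopologicalSpace β]
    [DiscreteTopology α] [DiscreteTopology β] (e : α ≃ β) : α ≃ₜ β :=
  { e with
    continuous_toFun := continuous_of_discreteTopology
    continuous_invFun := continuous_of_discreteTopology }

/-- For a clopen set `C`, `X` is homeomorphic to `C ⊕ Cᶜ`. -/
noncomputable def clopenSumCompl {X : Type*} [TopologicalSpace X] {C : Set X}
    (hC : IsClopen C) : (C ⊕ (Cᶜ : Set X)) ≃ₜ X := by
  classical
  refine Equiv.toHomeomorphOfContinuousOpen (Equiv.Set.sumCompl C) ?_ ?_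
  · have h : ⇑(Equiv.Set.sumCompl C) = Sum.elim Subtype.val Subtype.val := by
      ext (x | x) <;> simp
    rw [h]
    exact continuous_subtype_val.sumElim continuous_subtype_val
  · have h : ⇑(Equiv.Set.sumCompl C) = Sum.elim Subtype.val Subtype.val := by
      ext (x | x) <;> simp
    rw [h]
    exact IsOpenMap.sumElim (hC.2.isOpenMap_subtype_val) (hC.compl.2.isOpenMap_subtype_val)

/-- If `X` is a nonempty h-homogeneous space that is not connected, then `X` is homeomorphic
to the disjoint union of `n` copies of itself for every positive `n`. -/
theorem stmt3 {X : Type*} [TopologicalSpace X] [Nonempty X]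
    (hX : IsHHomogeneous X) (hnc : ¬ ConnectedSpace X) :
    ∀ n : ℕ, 0 < n → Nonempty (X ≃ₜ (Fin n × X)) := by
  -- extract a nontrivial clopen set
  obtain ⟨C, hC, hCne, hCcne⟩ : ∃ C : Set X, IsClopen C ∧ C.Nonempty ∧ Cᶜ.Nonempty := by
    by_contra h
    push_neg at h
    apply hnc
    have : PreconnectedSpace X := by
      constructor
      intro u v hu hv hcov hune hvne
      rw [univ_inter] at hune hvne
      by_contra hne
      rw [not_nonempty_iff_eq_empty, univ_inter] at hne
      have huv : u = vᶜ := by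
        apply subset_antisymm
        · intro x hx hxv
          exact absurd (Set.eq_empty_iff_forall_notMem.mp hne x ⟨hx, hxv⟩) (fun h => h)
        · intro x hxv
          rcases hcov (mem_univ x) with h1 | h1
          · exact h1
          · exact absurd h1 hxv
      have hclopen : IsClopen u := ⟨by rw [huv]; exact hv.isClosed_compl, hu⟩
      have h2 := h u hclopen hune
      rw [huv, compl_compl] at h2
      exact hvne.ne_empty h2
    exact { toNonempty := ‹_› }
  -- homeomorphisms of C and Cᶜ with X
  have hu : IsClopen (univ : Set X) := isClopen_univ
  obtain ⟨eC⟩ := hX C univ hC hCne hu univ_nonempty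
  obtain ⟨eCc⟩ := hX Cᶜ univ hC.compl hCcne hu univ_nonempty
  have eC' : C ≃ₜ X := eC.trans (Homeomorph.Set.univ X)
  have eCc' : (Cᶜ : Set X) ≃ₜ X := eCc.trans (Homeomorph.Set.univ X)
  -- X ≃ₜ X ⊕ X
  have e2 : X ≃ₜ (X ⊕ X) := (clopenSumCompl hC).symm.trans (eC'.sumCongr eCc')
  -- Fin 1 × X ≃ₜ X
  have e1 : (Fin 1 × X) ≃ₜ X :=
    (((discreteHomeomorph (Equiv.equivPUnit (Fin 1))).prodCongr (Homeomorph.refl X) :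
        (Fin 1 × X) ≃ₜ (PUnit.{1} × X))).trans
      (Homeomorph.punitProd X)
  intro n hn
  induction n with
  | zero => exact absurd hn (by simp)
  | succ n ih =>
    rcases Nat.eq_zero_or_pos n with rfl | hn'
    · exact ⟨e1.symm⟩
    · obtain ⟨en⟩ := ih hn'
      refine ⟨e2.trans ?_⟩
      have : (X ⊕ X) ≃ₜ ((Fin 1 × X) ⊕ (Fin n × X)) := (e1.symm).sumCongr en
      refine this.trans ?_
      refine (Homeomorph.sumProdDistrib).symm.trans ?_
      exact (discreteHomeomorph ((finSumFinEquiv).trans (finCongr (by omega)))).prodCongr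
        (Homeomorph.refl X)
end

section
/- For a topological space F and a space X, the following are equivalent: (1) F is a factor of X^ω, i.e., there exists Y with F × Y homeomorphic to X^ω; (2) F × X^ω is homeomorphic to X^ω; (3) F^ω × X^ω is homeomorphic to X^ω. -/
open Set

private def neZeroEquivNat : {j : ℕ // j ≠ 0} ≃ ℕ where
  toFun j := j.1 - 1
  invFun n := ⟨n + 1, Nat.succ_ne_zero n⟩
  left_inv := fun ⟨j, h⟩ => by cases j with
    | zero => exact absurd rfl h
    | succ n => simp
  right_inv n := by simp

/-- `A^ω ≅ A × A^ω`. -/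
private noncomputable def consHomeo (A : Type) [TopologicalSpace A] :
    (ℕ → A) ≃ₜ A × (ℕ → A) :=
  (Homeomorph.funSplitAt (Y := A) 0).trans
    (Homeomorph.prodCongr (Homeomorph.refl A)
      (Homeomorph.piCongrLeft (Y := fun _ => A) neZeroEquivNat))

/-- `(A × B)^ω ≅ A^ω × B^ω`. -/
private def prodPiHomeo (A B : Type) [TopologicalSpace A] [TopologicalSpace B] :
    (ℕ → A × B) ≃ₜ (ℕ → A) × (ℕ → B) where
  toEquiv := Equiv.arrowProdEquivProdArrow ℕ (fun _ => A) (fun _ => B)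
  continuous_toFun := by
    apply Continuous.prodMk <;> exact continuous_pi fun i =>
      (Continuous.comp (by fun_prop) (continuous_apply i))
  continuous_invFun := continuous_pi fun i => by
    exact ((continuous_apply i).comp continuous_fst).prodMk
      ((continuous_apply i).comp continuous_snd)

/-- `(X^ω)^ω ≅ X^ω`. -/
private noncomputable def powPowHomeo (A : Type) [TopologicalSpace A] :
    (ℕ → ℕ → A) ≃ₜ (ℕ → A) where
  toEquiv := (Equiv.curry ℕ ℕ A).symm.trans
    (Equiv.arrowCongr (Denumerable.eqv (ℕ × ℕ)) (Equiv.refl A))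
  continuous_toFun := continuous_pi fun n => by
    show Continuous fun f : ℕ → ℕ → A =>
      f ((Denumerable.eqv (ℕ × ℕ)).symm n).1 ((Denumerable.eqv (ℕ × ℕ)).symm n).2
    exact (continuous_apply _).comp (continuous_apply _)
  continuous_invFun := continuous_pi fun i => continuous_pi fun j => by
    show Continuous fun f : ℕ → A => f ((Denumerable.eqv (ℕ × ℕ)) (i, j))
    exact continuous_apply _

/-- `A^ω × A^ω ≅ A^ω`. -/
private noncomputable def squareHomeo (A : Type) [TopologicalSpace A] :
    (ℕ → A) × (ℕ → A) ≃ₜ (ℕ → A) :=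
  (Homeomorph.sumArrowHomeomorphProdArrow (X := A)).symm.trans
    (Homeomorph.piCongrLeft (Y := fun _ => A) (Denumerable.eqv (ℕ ⊕ ℕ)))

/-- For spaces `F` and `X`, the following are equivalent: `F` is a factor of `X^ω`;
`F × X^ω ≅ X^ω`; `F^ω × X^ω ≅ X^ω`. -/
theorem stmt6 (F X : Type) [TopologicalSpace F] [TopologicalSpace X] :
    List.TFAE
      [∃ (Y : Type) (_ : TopologicalSpace Y), Nonempty ((F × Y) ≃ₜ (ℕ → X)),
       Nonempty ((F × (ℕ → X)) ≃ₜ (ℕ → X)),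
       Nonempty (((ℕ → F) × (ℕ → X)) ≃ₜ (ℕ → X))] := by
  tfae_have 1 → 3 := by
    rintro ⟨Y, _, ⟨e⟩⟩
    -- e' : X^ω ≅ F^ω × Y^ω
    refine ⟨?_⟩
    have e' : (ℕ → X) ≃ₜ (ℕ → F) × (ℕ → Y) :=
      (powPowHomeo X).symm.trans <|
        (Homeomorph.piCongrRight fun _ => e.symm).trans (prodPiHomeo F Y)
    exact ((Homeomorph.prodCongr (Homeomorph.refl (ℕ → F)) e').trans
      ((Homeomorph.prodAssoc _ _ _).symm.trans
        ((Homeomorph.prodCongr (squareHomeo F) (Homeomorph.refl (ℕ → Y))).trans e'.symm)))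
  tfae_have 3 → 2 := by
    rintro ⟨e⟩
    refine ⟨?_⟩
    exact ((Homeomorph.prodCongr (Homeomorph.refl F) e.symm).trans
      ((Homeomorph.prodAssoc _ _ _).symm.trans
        ((Homeomorph.prodCongr (consHomeo F).symm (Homeomorph.refl (ℕ → X))).trans e)))
  tfae_have 2 → 1 := fun h => ⟨ℕ → X, inferInstance, h⟩
  tfae_finish
end

section
/- If X is a zero-dimensional space whose isolated points are dense, then X^ω is h-homogeneous. -/
open Set

/-- `X` is zero-dimensional: it has a base of clopen sets. -/
def ZeroDimensional (X : Type*) [TopologicalSpace X] : Prop :=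
  ∀ (x : X) (U : Set X), IsOpen U → x ∈ U → ∃ V : Set X, IsClopen V ∧ x ∈ V ∧ V ⊆ U

namespace Stmt13Aux

set_option linter.unusedSectionVars false

variable {X : Type*} [TopologicalSpace X]

lemma singleton_clopen (hzd : ZeroDimensional X) {x : X} (hx : IsOpen ({x} : Set X)) :
    IsClopen ({x} : Set X) := by
  obtain ⟨V, hV, hxV, hVsub⟩ := hzd x {x} hx rfl
  have hVx : V = {x} := le_antisymm hVsub (singleton_subset_iff.mpr hxV)
  exact hVx ▸ hV

/-- Piecewise-over-a-clopen-set continuity helper. -/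
lemma continuous_of_clopen_cases {α β : Type*} [TopologicalSpace α] [TopologicalSpace β]
    {S : Set α} (hS : IsClopen S) {f : α → β}
    (h1 : Continuous (S.restrict f)) (h2 : Continuous (Sᶜ.restrict f)) : Continuous f := by
  rw [continuous_iff_continuousAt]
  intro x
  by_cases hx : x ∈ S
  · exact (continuousOn_iff_continuous_restrict.mpr h1).continuousAt (hS.isOpen.mem_nhds hx)
  · exact (continuousOn_iff_continuous_restrict.mpr h2).continuousAt
      (hS.compl.isOpen.mem_nhds hx)

/-- Prepend an element to a sequence. -/
def cns (a : X) (z : ℕ → X) : ℕ → X := fun k => match k with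
  | 0 => a
  | (m+1) => z m

/-- Drop the first element of a sequence. -/
def tl (z : ℕ → X) : ℕ → X := fun k => z (k + 1)

lemma tl_cns (a : X) (z : ℕ → X) : tl (cns a z) = z := rfl

lemma cns_tl (a : X) {z : ℕ → X} (h0 : z 0 = a) : cns a (tl z) = z := by
  funext k
  cases k with
  | zero => exact h0.symm
  | succ m => rfl

/-- The clopen "cylinder" of sequences starting with `n` copies of `d` followed by `e`. -/
def KK (d e : X) (n : ℕ) : Set (ℕ → X) := {z | (∀ i, i < n → z i = d) ∧ z n = e}

/-- Drop the first `n+1` entries. -/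
def tlN (n : ℕ) (z : ℕ → X) : ℕ → X := fun k => z (k + n + 1)

/-- The copy of `E` sitting inside `KK d e n`. -/
def AA (d e : X) (E : Set (ℕ → X)) (n : ℕ) : Set (ℕ → X) := KK d e n ∩ tlN n ⁻¹' E

lemma KK_unique {d e : X} (hde : d ≠ e) {n m : ℕ} {z : ℕ → X}
    (hn : z ∈ KK d e n) (hm : z ∈ KK d e m) : n = m := by
  rcases lt_trichotomy n m with h | h | h
  · exact absurd ((hm.1 n h).symm.trans hn.2) hde
  · exact h
  · exact absurd ((hn.1 m h).symm.trans hm.2) hde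

lemma AA_unique {d e : X} {E : Set (ℕ → X)} (hde : d ≠ e) {n m : ℕ} {z : ℕ → X}
    (hn : z ∈ AA d e E n) (hm : z ∈ AA d e E m) : n = m :=
  KK_unique hde hn.1 hm.1

lemma isClopen_KK {d e : X} (hd : IsClopen ({d} : Set X)) (he : IsClopen ({e} : Set X))
    (n : ℕ) : IsClopen (KK d e n) := by
  have hrw : KK d e n =
      (⋂ i ∈ Finset.range n, (fun z : ℕ → X => z i) ⁻¹' {d}) ∩
        ((fun z : ℕ → X => z n) ⁻¹' {e}) := by
    ext z
    simp [KK, Finset.mem_range]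
  rw [hrw]
  exact (isClopen_biInter_finset fun i _ => hd.preimage (continuous_apply i)).inter
    (he.preimage (continuous_apply n))

lemma continuous_tlN (n : ℕ) : Continuous (tlN n : (ℕ → X) → ℕ → X) :=
  continuous_pi fun k => continuous_apply (k + n + 1)

lemma isClopen_AA {d e : X} {E : Set (ℕ → X)} (hd : IsClopen ({d} : Set X))
    (he : IsClopen ({e} : Set X)) (hE : IsClopen E) (n : ℕ) : IsClopen (AA d e E n) :=
  (isClopen_KK hd he n).inter (hE.preimage (continuous_tlN n))

lemma mem_AA_cns {d e : X} {E : Set (ℕ → X)} {n : ℕ} {z : ℕ → X}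
    (h : z ∈ AA d e E n) : cns d z ∈ AA d e E (n + 1) := by
  obtain ⟨⟨h1, h2⟩, h3⟩ := h
  refine ⟨⟨?_, h2⟩, h3⟩
  intro i hi
  cases i with
  | zero => rfl
  | succ m => exact h1 m (by omega)

lemma mem_AA_tl {d e : X} {E : Set (ℕ → X)} {n : ℕ} {z : ℕ → X}
    (h : z ∈ AA d e E (n + 1)) : tl z ∈ AA d e E n := by
  obtain ⟨⟨h1, h2⟩, h3⟩ := h
  exact ⟨⟨fun i hi => h1 (i + 1) (by omega), h2⟩, h3⟩

open Classical in
/-- The "insert a `d`" map: on each copy `AA n` of `E` it shifts to the copy `AA (n+1)`,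
elsewhere it is the identity. -/
noncomputable def HH (d e : X) (E : Set (ℕ → X)) : (ℕ → X) → ℕ → X :=
  fun z => if z ∈ ⋃ n, AA d e E n then cns d z else z

open Classical in
/-- The inverse map of `HH` (on the complement of `AA 0`). -/
noncomputable def GG (d e : X) (E : Set (ℕ → X)) : (ℕ → X) → ℕ → X :=
  fun z => if z ∈ ⋃ n, AA d e E (n + 1) then tl z else z

lemma HH_of_mem {d e : X} {E : Set (ℕ → X)} {n : ℕ} {z : ℕ → X} (h : z ∈ AA d e E n) :
    HH d e E z = cns d z := by
  unfold HH; rw [if_pos (mem_iUnion.mpr ⟨n, h⟩)]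

lemma HH_of_not_mem {d e : X} {E : Set (ℕ → X)} {z : ℕ → X} (h : z ∉ ⋃ n, AA d e E n) :
    HH d e E z = z := by
  unfold HH; rw [if_neg h]

lemma GG_of_mem {d e : X} {E : Set (ℕ → X)} {n : ℕ} {z : ℕ → X} (h : z ∈ AA d e E (n + 1)) :
    GG d e E z = tl z := by
  unfold GG; rw [if_pos (mem_iUnion.mpr ⟨n, h⟩)]

lemma GG_of_not_mem {d e : X} {E : Set (ℕ → X)} {z : ℕ → X}
    (h : z ∉ ⋃ n, AA d e E (n + 1)) : GG d e E z = z := by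
  unfold GG; rw [if_neg h]

lemma GG_HH {d e : X} {E : Set (ℕ → X)} (z : ℕ → X) : GG d e E (HH d e E z) = z := by
  by_cases h : z ∈ ⋃ n, AA d e E n
  · obtain ⟨n, hn⟩ := mem_iUnion.mp h
    rw [HH_of_mem hn, GG_of_mem (mem_AA_cns hn), tl_cns]
  · rw [HH_of_not_mem h, GG_of_not_mem]
    intro hmem
    obtain ⟨n, hn⟩ := mem_iUnion.mp hmem
    exact h (mem_iUnion.mpr ⟨n + 1, hn⟩)

lemma HH_not_mem_AA0 {d e : X} {E : Set (ℕ → X)} (hde : d ≠ e) (z : ℕ → X) :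
    HH d e E z ∉ AA d e E 0 := by
  by_cases h : z ∈ ⋃ n, AA d e E n
  · obtain ⟨n, hn⟩ := mem_iUnion.mp h
    rw [HH_of_mem hn]
    intro h0
    exact Nat.succ_ne_zero n (AA_unique hde (mem_AA_cns hn) h0)
  · rw [HH_of_not_mem h]
    intro h0
    exact h (mem_iUnion.mpr ⟨0, h0⟩)

lemma HH_GG {d e : X} {E : Set (ℕ → X)} {z : ℕ → X} (h0 : z ∉ AA d e E 0) :
    HH d e E (GG d e E z) = z := by
  by_cases h : z ∈ ⋃ n, AA d e E (n + 1)
  · obtain ⟨n, hn⟩ := mem_iUnion.mp h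
    rw [GG_of_mem hn, HH_of_mem (mem_AA_tl hn)]
    exact cns_tl d (hn.1.1 0 (Nat.succ_pos n))
  · have h' : z ∉ ⋃ n, AA d e E n := by
      intro hmem
      obtain ⟨n, hn⟩ := mem_iUnion.mp hmem
      cases n with
      | zero => exact h0 hn
      | succ m => exact h (mem_iUnion.mpr ⟨m, hn⟩)
    rw [GG_of_not_mem h, HH_of_not_mem h']

lemma cns_apply_eq_of_lt {d e : X} {n : ℕ} {z : ℕ → X} (hz : z ∈ KK d e n) {k : ℕ}
    (hk : k < n) : cns d z k = z k := by
  cases k with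
  | zero => exact (hz.1 0 hk).symm
  | succ m =>
    show z m = z (m + 1)
    rw [hz.1 m (by omega), hz.1 (m + 1) hk]

open Classical in
lemma HH_apply {d e : X} {E : Set (ℕ → X)} (hde : d ≠ e) (z : ℕ → X) (k : ℕ) :
    HH d e E z k =
      if z ∈ ⋃ n ∈ Finset.range (k + 1), AA d e E n then cns d z k else z k := by
  by_cases h : z ∈ ⋃ n, AA d e E n
  · obtain ⟨n, hn⟩ := mem_iUnion.mp h
    rw [HH_of_mem hn]
    by_cases hnk : n ≤ k
    · rw [if_pos (mem_iUnion₂.mpr ⟨n, Finset.mem_range.mpr (by omega), hn⟩)]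
    · rw [if_neg, cns_apply_eq_of_lt hn.1 (by omega)]
      intro hc
      obtain ⟨m, hm, hzm⟩ := mem_iUnion₂.mp hc
      have hm' := Finset.mem_range.mp hm
      have heq := AA_unique hde hzm hn
      omega
  · rw [HH_of_not_mem h, if_neg]
    intro hc
    obtain ⟨m, _, hzm⟩ := mem_iUnion₂.mp hc
    exact h (mem_iUnion.mpr ⟨m, hzm⟩)

open Classical in
lemma GG_apply {d e : X} {E : Set (ℕ → X)} (hde : d ≠ e) (z : ℕ → X) (k : ℕ) :
    GG d e E z k =
      if z ∈ ⋃ n ∈ Finset.range (k + 1), AA d e E (n + 1) then z (k + 1) else z k := by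
  by_cases h : z ∈ ⋃ n, AA d e E (n + 1)
  · obtain ⟨n, hn⟩ := mem_iUnion.mp h
    rw [GG_of_mem hn]
    by_cases hnk : n ≤ k
    · rw [if_pos (mem_iUnion₂.mpr ⟨n, Finset.mem_range.mpr (by omega), hn⟩)]; rfl
    · rw [if_neg]
      · show z (k + 1) = z k
        rw [hn.1.1 (k + 1) (by omega), hn.1.1 k (by omega)]
      · intro hc
        obtain ⟨m, hm, hzm⟩ := mem_iUnion₂.mp hc
        have : m + 1 = n + 1 := AA_unique hde hzm hn
        rw [Finset.mem_range] at hm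
        omega
  · rw [GG_of_not_mem h, if_neg]
    intro hc
    obtain ⟨m, _, hzm⟩ := mem_iUnion₂.mp hc
    exact h (mem_iUnion.mpr ⟨m, hzm⟩)

lemma continuous_cns_apply (d : X) (k : ℕ) : Continuous fun z : ℕ → X => cns d z k := by
  cases k with
  | zero => exact continuous_const
  | succ m => exact continuous_apply m

lemma continuous_HH {d e : X} {E : Set (ℕ → X)} (hde : d ≠ e) (hd : IsClopen ({d} : Set X))
    (he : IsClopen ({e} : Set X)) (hE : IsClopen E) : Continuous (HH d e E) := by
  classical
  apply continuous_pi
  intro k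
  have hrw : (fun z => HH d e E z k) = fun z =>
      if z ∈ ⋃ n ∈ Finset.range (k + 1), AA d e E n then cns d z k else z k :=
    funext fun z => HH_apply hde z k
  rw [hrw]
  have hS : IsClopen (⋃ n ∈ Finset.range (k + 1), AA d e E n) :=
    isClopen_biUnion_finset fun i _ => isClopen_AA hd he hE i
  apply Continuous.if _ (continuous_cns_apply d k) (continuous_apply k)
  intro a ha
  rw [setOf_mem_eq, hS.frontier_eq] at ha
  exact absurd ha (notMem_empty a)

lemma continuous_GG {d e : X} {E : Set (ℕ → X)} (hde : d ≠ e) (hd : IsClopen ({d} : Set X))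
    (he : IsClopen ({e} : Set X)) (hE : IsClopen E) : Continuous (GG d e E) := by
  classical
  apply continuous_pi
  intro k
  have hrw : (fun z => GG d e E z k) = fun z =>
      if z ∈ ⋃ n ∈ Finset.range (k + 1), AA d e E (n + 1) then z (k + 1) else z k :=
    funext fun z => GG_apply hde z k
  rw [hrw]
  have hS : IsClopen (⋃ n ∈ Finset.range (k + 1), AA d e E (n + 1)) :=
    isClopen_biUnion_finset fun i _ => isClopen_AA hd he hE (i + 1)
  apply Continuous.if _ (continuous_apply (k + 1)) (continuous_apply k)
  intro a ha
  rw [setOf_mem_eq, hS.frontier_eq] at ha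
  exact absurd ha (notMem_empty a)

/-- The homeomorphism between the whole space and the complement of the copy `AA 0` of `E`. -/
noncomputable def homeoH {d e : X} {E : Set (ℕ → X)} (hde : d ≠ e)
    (hd : IsClopen ({d} : Set X)) (he : IsClopen ({e} : Set X)) (hE : IsClopen E) :
    (ℕ → X) ≃ₜ ↥((AA d e E 0)ᶜ) where
  toFun z := ⟨HH d e E z, HH_not_mem_AA0 hde z⟩
  invFun q := GG d e E q.1
  left_inv z := GG_HH z
  right_inv q := Subtype.ext (HH_GG q.2)
  continuous_toFun := Continuous.subtype_mk (continuous_HH hde hd he hE) _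
  continuous_invFun := (continuous_GG hde hd he hE).comp continuous_subtype_val

lemma cns_e_mem_AA0 {d e : X} {E : Set (ℕ → X)} {z : ℕ → X} (hz : z ∈ E) :
    cns e z ∈ AA d e E 0 :=
  ⟨⟨fun i hi => absurd hi (Nat.not_lt_zero i), rfl⟩, hz⟩

/-- The homeomorphism between `E` and its copy `AA 0`. -/
noncomputable def homeoE (d e : X) (E : Set (ℕ → X)) : ↥E ≃ₜ ↥(AA d e E 0) where
  toFun p := ⟨cns e p.1, cns_e_mem_AA0 p.2⟩
  invFun q := ⟨tl q.1, q.2.2⟩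
  left_inv p := Subtype.ext (tl_cns e p.1)
  right_inv q := Subtype.ext (cns_tl e q.2.1.2)
  continuous_toFun := by
    apply Continuous.subtype_mk
    apply continuous_pi
    intro k
    cases k with
    | zero => exact continuous_const
    | succ m => exact (continuous_apply m).comp continuous_subtype_val
  continuous_invFun := by
    apply Continuous.subtype_mk
    exact continuous_pi fun k => (continuous_apply (k + 1)).comp continuous_subtype_val

open Classical in
/-- Splitting a set along a clopen subset, as a homeomorphism with a disjoint sum. -/
noncomputable def clopenPieceSum {α : Type*} [TopologicalSpace α] {s t : Set α}
    (ht : IsClopen t) (hts : t ⊆ s) : (↥t ⊕ ↥(s \ t)) ≃ₜ ↥s where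
  toFun := Sum.elim (fun p => ⟨p.1, hts p.2⟩) (fun p => ⟨p.1, p.2.1⟩)
  invFun q := if h : q.1 ∈ t then Sum.inl ⟨q.1, h⟩ else Sum.inr ⟨q.1, q.2, h⟩
  left_inv p := by
    rcases p with p | p
    · simp only [Sum.elim_inl, dif_pos p.2]
      exact dif_pos p.2
    · simp only [Sum.elim_inr, dif_neg p.2.2]
      exact dif_neg p.2.2
  right_inv q := by
    by_cases h : q.1 ∈ t
    · simp only [dif_pos h, Sum.elim_inl]
    · simp only [dif_neg h, Sum.elim_inr]
  continuous_toFun :=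
    Continuous.sumElim (Continuous.subtype_mk continuous_subtype_val _)
      (Continuous.subtype_mk continuous_subtype_val _)
  continuous_invFun := by
    apply continuous_of_clopen_cases (S := (Subtype.val ⁻¹' t : Set ↥s))
      (ht.preimage continuous_subtype_val)
    · have hrw : ((Subtype.val ⁻¹' t : Set ↥s)).restrict
          (fun q : ↥s => if h : q.1 ∈ t then (Sum.inl ⟨q.1, h⟩ : ↥t ⊕ ↥(s \ t))
            else Sum.inr ⟨q.1, q.2, h⟩) =
          fun u => Sum.inl ⟨u.1.1, u.2⟩ := funext fun u => dif_pos u.2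
      rw [hrw]
      exact continuous_inl.comp (Continuous.subtype_mk
        (continuous_subtype_val.comp continuous_subtype_val) _)
    · have hrw : ((Subtype.val ⁻¹' t : Set ↥s)ᶜ).restrict
          (fun q : ↥s => if h : q.1 ∈ t then (Sum.inl ⟨q.1, h⟩ : ↥t ⊕ ↥(s \ t))
            else Sum.inr ⟨q.1, q.2, h⟩) =
          fun u => Sum.inr ⟨u.1.1, u.1.2, u.2⟩ := funext fun u => dif_neg u.2
      rw [hrw]
      exact continuous_inr.comp (Continuous.subtype_mk
        (continuous_subtype_val.comp continuous_subtype_val) _)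

/-- The cylinder determined by the first `n` values being `s`. -/
def cyl (s : ℕ → X) (n : ℕ) : Set (ℕ → X) := {z | ∀ i, i < n → z i = s i}

lemma isClopen_cyl (s : ℕ → X) (hs : ∀ i, IsClopen ({s i} : Set X)) (n : ℕ) :
    IsClopen (cyl s n) := by
  have hrw : cyl s n = ⋂ i ∈ Finset.range n, (fun z : ℕ → X => z i) ⁻¹' {s i} := by
    ext z
    simp [cyl, Finset.mem_range]
  rw [hrw]
  exact isClopen_biInter_finset fun i _ => (hs i).preimage (continuous_apply i)

/-- Every cylinder is homeomorphic to the whole space. -/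
noncomputable def cylHomeo (s : ℕ → X) (n : ℕ) : (ℕ → X) ≃ₜ ↥(cyl s n) where
  toFun g := ⟨fun k => if h : k < n then s k else g (k - n), fun i hi => dif_pos hi⟩
  invFun p := fun k => p.1 (k + n)
  left_inv g := by
    funext k
    show (if h : k + n < n then s (k + n) else g (k + n - n)) = g k
    rw [dif_neg (by omega), Nat.add_sub_cancel]
  right_inv p := by
    apply Subtype.ext
    funext k
    show (if h : k < n then s k else p.1 (k - n + n)) = p.1 k
    by_cases h : k < n
    · rw [dif_pos h, (p.2 k h)]
    · rw [dif_neg h, Nat.sub_add_cancel (by omega)]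
  continuous_toFun := by
    apply Continuous.subtype_mk
    apply continuous_pi
    intro k
    by_cases h : k < n
    · simp only [dif_pos h]
      exact continuous_const
    · simp only [dif_neg h]
      exact continuous_apply (k - n)
  continuous_invFun := continuous_pi fun k => (continuous_apply (k + n)).comp
    continuous_subtype_val

lemma pibase (hzd : ZeroDimensional X) (hdense : Dense {x : X | IsOpen ({x} : Set X)})
    {C : Set (ℕ → X)} (hC : IsOpen C) (hne : C.Nonempty) {d : X}
    (hd : IsClopen ({d} : Set X)) :
    ∃ (n : ℕ) (s : ℕ → X), (∀ i, IsClopen ({s i} : Set X)) ∧ cyl s n ⊆ C := by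
  classical
  obtain ⟨g, hg⟩ := hne
  obtain ⟨I, u, h1, h2⟩ := isOpen_pi_iff.mp hC g hg
  have hex : ∀ i ∈ I, ∃ x, x ∈ u i ∧ IsOpen ({x} : Set X) := by
    intro i hi
    obtain ⟨x, hx1, hx2⟩ := hdense.exists_mem_open (h1 i hi).1 ⟨g i, (h1 i hi).2⟩
    exact ⟨x, hx2, hx1⟩
  refine ⟨I.sup id + 1, fun i => if h : i ∈ I then (hex i h).choose else d, ?_, ?_⟩
  · intro i
    by_cases h : i ∈ I
    · simp only [dif_pos h]
      exact singleton_clopen hzd (hex i h).choose_spec.2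
    · simp only [dif_neg h]
      exact hd
  · intro z hz
    apply h2
    intro i hi
    have hiI : i ∈ I := hi
    have hlt : i < I.sup id + 1 := Nat.lt_succ_of_le (Finset.le_sup (f := id) hiI)
    rw [hz i hlt]
    simp only [dif_pos hiI]
    exact (hex i hiI).choose_spec.1

/-- Key lemma: every nonempty clopen subset of `X^ω` is homeomorphic to `X^ω`. -/
lemma key (hzd : ZeroDimensional X) (hdense : Dense {x : X | IsOpen ({x} : Set X)})
    {d e : X} (hd : IsClopen ({d} : Set X)) (he : IsClopen ({e} : Set X)) (hde : d ≠ e)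
    {C : Set (ℕ → X)} (hC : IsClopen C) (hne : C.Nonempty) :
    Nonempty (↥C ≃ₜ (ℕ → X)) := by
  obtain ⟨n, s, hs, hsub⟩ := pibase hzd hdense hC.isOpen hne hd
  have hV : IsClopen (cyl s n) := isClopen_cyl s hs n
  set E : Set (ℕ → X) := C \ cyl s n with hEdef
  have hE : IsClopen E := hC.diff hV
  have e1 : ↥C ≃ₜ (↥(cyl s n) ⊕ ↥E) := (clopenPieceSum hV hsub).symm
  have e2 : ↥(cyl s n) ≃ₜ (ℕ → X) := (cylHomeo s n).symm
  have e3 : (ℕ → X) ≃ₜ ↥((AA d e E 0)ᶜ) := homeoH hde hd he hE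
  have e4 : ↥E ≃ₜ ↥(AA d e E 0) := homeoE d e E
  have e5 : (↥(AA d e E 0) ⊕ ↥(univ \ AA d e E 0)) ≃ₜ ↥(univ : Set (ℕ → X)) :=
    clopenPieceSum (isClopen_AA hd he hE 0) (subset_univ _)
  have e6 : ↥((AA d e E 0)ᶜ) ≃ₜ ↥(univ \ AA d e E 0) :=
    Homeomorph.setCongr (compl_eq_univ_diff _)
  exact ⟨e1.trans <| (Homeomorph.sumCongr (e2.trans e3) e4).trans <|
    (Homeomorph.sumComm _ _).trans <| (Homeomorph.sumCongr (Homeomorph.refl _) e6).trans <|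
    e5.trans (Homeomorph.Set.univ _)⟩

end Stmt13Aux

open Stmt13Aux in
/-- If `X` is zero-dimensional and its isolated points are dense, then `X^ω` is
h-homogeneous. -/
theorem stmt13 {X : Type*} [TopologicalSpace X] (hzd : ZeroDimensional X)
    (hdense : Dense {x : X | IsOpen ({x} : Set X)}) :
    IsHHomogeneous (ℕ → X) := by
  intro C D hC hCne hD hDne
  by_cases hX : ∃ x y : X, x ≠ y
  · obtain ⟨x, y, hxy⟩ := hX
    obtain ⟨d, hd', hdu⟩ := hdense.exists_mem_open isOpen_univ ⟨x, trivial⟩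
    have hd : IsClopen ({d} : Set X) := singleton_clopen hzd hd'
    have hne' : ({d}ᶜ : Set X).Nonempty := by
      by_cases hx : x = d
      · exact ⟨y, by simp [show y ≠ d from fun h => hxy (hx.trans h.symm)]⟩
      · exact ⟨x, by simp [hx]⟩
    obtain ⟨e, he', heC⟩ := hdense.exists_mem_open hd.compl.isOpen hne'
    have he : IsClopen ({e} : Set X) := singleton_clopen hzd he'
    have hde : d ≠ e := by
      intro h
      subst h
      exact heC rfl
    obtain ⟨f1⟩ := key hzd hdense hd he hde hC hCne
    obtain ⟨f2⟩ := key hzd hdense hd he hde hD hDne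
    exact ⟨f1.trans f2.symm⟩
  · push_neg at hX
    haveI hsub : Subsingleton (ℕ → X) := ⟨fun a b => funext fun k => hX (a k) (b k)⟩
    haveI hCne' : Nonempty ↥C := hCne.to_subtype
    haveI hDne' : Nonempty ↥D := hDne.to_subtype
    refine ⟨⟨⟨fun _ => Classical.arbitrary ↥D, fun _ => Classical.arbitrary ↥C, ?_, ?_⟩,
      continuous_const, continuous_const⟩⟩
    · intro a
      exact Subsingleton.elim _ _
    · intro a
      exact Subsingleton.elim _ _
end
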